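/- Let G be a finite simple graph and S ⊆ V(G), and let ∂(S) denote the boundary of S in G, i.e., the set of vertices of S having a neighbor in V(G) ∖ S. Let H be a finite simple graph with V(H) ∩ V(G) = ∂(S) such that B_{G[S]}(∂(S)) = B_H(∂(S)). Let G' be the graph obtained from G by replacing G[S] by H, i.e., V(G') = (V(G) ∖ (S ∖ ∂(S))) ∪ V(H) and E(G') = {e ∈ E(G) : not both endpoints of e lie in S} ∪ E(H). Then: (a) for every proper 2-coloring K of G, the restriction of K to (V(G) ∖ S) ∪ ∂(S) extends to a proper 2-coloring of G'; and (b) for every proper 2-coloring K' of G', the restriction of K' to (V(G) ∖ S) ∪ ∂(S) extends to a proper 2-coloring of G. -/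

import Mathlib

open scoped Classical

/-- A finite simple graph on a subset of an ambient vertex type `U`. -/
structure FinGraph (U : Type) where
  verts : Finset U
  G : SimpleGraph U
  support : ∀ ⦃u v : U⦄, G.Adj u v → u ∈ verts ∧ v ∈ verts

/-- The restriction (induced subgraph) of a `SimpleGraph` to a finite vertex set. -/
def SimpleGraph.restrictTo {U : Type} (G : SimpleGraph U) (s : Finset U) : SimpleGraph U where
  Adj u v := G.Adj u v ∧ u ∈ s ∧ v ∈ s
  symm := ⟨fun u v h => ⟨h.1.symm, h.2.2, h.2.1⟩⟩
  loopless := ⟨fun u h => G.irrefl h.1⟩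

/-- The boundary `∂(S)` of `S` in `G`: vertices of `S` with a neighbor outside `S`. -/
noncomputable def FinGraph.bdry {U : Type} [DecidableEq U] (G : FinGraph U) (S : Finset U) :
    Finset U :=
  S.filter fun v => ∃ u, G.G.Adj v u ∧ u ∉ S

/-- The set of bipartitions `B_G(S)`: subsets `S' ⊆ S` for which some proper 2-coloring of `G`
colors all of `S'` with `true` and all of `S ∖ S'` with `false`. -/
def Bip {U : Type} [DecidableEq U] (G : SimpleGraph U) (S : Finset U) : Set (Finset U) :=
  {S' | S' ⊆ S ∧ ∃ c : U → Bool, (∀ ⦃u v⦄, G.Adj u v → c u ≠ c v) ∧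
    (∀ v ∈ S', c v = true) ∧ ∀ v ∈ S \ S', c v = false}

/-- if `H` (with `V(H) ∩ V(G) = ∂(S)`) satisfies
`B_{G[S]}(∂(S)) = B_H(∂(S))`, and `G'` is obtained from `G` by replacing `G[S]` by `H`,
then proper 2-colorings of `G` and of `G'` extend each other across
`(V(G) ∖ S) ∪ ∂(S)`. -/
theorem replace_subgraph_extending_coloring {U : Type} [DecidableEq U]
    (G : FinGraph U) (S : Finset U) (hS : S ⊆ G.verts)
    (H : FinGraph U)
    (hHG : H.verts ∩ G.verts = G.bdry S)
    (hBip : Bip (G.G.restrictTo S) (G.bdry S) = Bip H.G (G.bdry S))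
    (G' : FinGraph U)
    (hG'verts : G'.verts = (G.verts \ (S \ G.bdry S)) ∪ H.verts)
    (hG'adj : ∀ a b : U, G'.G.Adj a b ↔
      ((G.G.Adj a b ∧ ¬(a ∈ S ∧ b ∈ S)) ∨ H.G.Adj a b)) :
    (∀ c : U → Bool, (∀ ⦃u v⦄, G.G.Adj u v → c u ≠ c v) →
      ∃ c' : U → Bool, (∀ ⦃u v⦄, G'.G.Adj u v → c' u ≠ c' v) ∧
        ∀ v ∈ (G.verts \ S) ∪ G.bdry S, c' v = c v) ∧
    (∀ c' : U → Bool, (∀ ⦃u v⦄, G'.G.Adj u v → c' u ≠ c' v) →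
      ∃ c : U → Bool, (∀ ⦃u v⦄, G.G.Adj u v → c u ≠ c v) ∧
        ∀ v ∈ (G.verts \ S) ∪ G.bdry S, c v = c' v) := by
  have hBmem : ∀ v, v ∈ G.bdry S ↔ v ∈ S ∧ ∃ u, G.G.Adj v u ∧ u ∉ S := by
    intro v; simp [FinGraph.bdry]
  constructor
  · -- part (a)
    intro c hc
    have hmem : ((G.bdry S).filter fun v => c v = true) ∈
        Bip (G.G.restrictTo S) (G.bdry S) := by
      refine ⟨Finset.filter_subset _ _, c, fun u v h => hc h.1, ?_, ?_⟩
      · intro v hv; exact (Finset.mem_filter.mp hv).2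
      · intro v hv
        obtain ⟨hv1, hv2⟩ := Finset.mem_sdiff.mp hv
        by_contra hne
        exact hv2 (Finset.mem_filter.mpr ⟨hv1, by simpa using hne⟩)
    rw [hBip] at hmem
    obtain ⟨-, d, hd, hd1, hd2⟩ := hmem
    have hcd : ∀ v ∈ G.bdry S, d v = c v := by
      intro v hv
      by_cases h : c v = true
      · rw [h]; exact hd1 v (Finset.mem_filter.mpr ⟨hv, h⟩)
      · have hcf : c v = false := by simpa using h
        rw [hcf]
        exact hd2 v (Finset.mem_sdiff.mpr ⟨hv, fun hm => h (Finset.mem_filter.mp hm).2⟩)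
    set e : U → Bool := fun v => if v ∈ H.verts then d v else c v with he
    have hglue : ∀ w ∈ G.verts, e w = c w := by
      intro w hw
      by_cases h : w ∈ H.verts
      · have : w ∈ G.bdry S := by rw [← hHG]; exact Finset.mem_inter.mpr ⟨h, hw⟩
        simp only [he, if_pos h]; exact hcd w this
      · simp [he, h]
    refine ⟨e, ?_, ?_⟩
    · intro u v hadj
      rcases (hG'adj u v).mp hadj with ⟨hG, -⟩ | hH
      · rw [hglue u (G.support hG).1, hglue v (G.support hG).2]
        exact hc hG
      · have hu := (H.support hH).1
        have hv := (H.support hH).2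
        simp only [he, if_pos hu, if_pos hv]
        exact hd hH
    · intro v hv
      rcases Finset.mem_union.mp hv with h | h
      · exact hglue v (Finset.mem_sdiff.mp h).1
      · exact hglue v (hS (hBmem v |>.mp h).1)
  · -- part (b)
    intro c' hc'
    have hmem : ((G.bdry S).filter fun v => c' v = true) ∈
        Bip H.G (G.bdry S) := by
      refine ⟨Finset.filter_subset _ _, c', ?_, ?_, ?_⟩
      · intro u v h; exact hc' ((hG'adj u v).mpr (Or.inr h))
      · intro v hv; exact (Finset.mem_filter.mp hv).2
      · intro v hv
        obtain ⟨hv1, hv2⟩ := Finset.mem_sdiff.mp hv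
        by_contra hne
        exact hv2 (Finset.mem_filter.mpr ⟨hv1, by simpa using hne⟩)
    rw [← hBip] at hmem
    obtain ⟨-, d, hd, hd1, hd2⟩ := hmem
    have hcd : ∀ v ∈ G.bdry S, d v = c' v := by
      intro v hv
      by_cases h : c' v = true
      · rw [h]; exact hd1 v (Finset.mem_filter.mpr ⟨hv, h⟩)
      · have hcf : c' v = false := by simpa using h
        rw [hcf]
        exact hd2 v (Finset.mem_sdiff.mpr ⟨hv, fun hm => h (Finset.mem_filter.mp hm).2⟩)
    set e : U → Bool := fun v => if v ∈ S then d v else c' v with he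
    refine ⟨e, ?_, ?_⟩
    · intro u v hadj
      by_cases hus : u ∈ S <;> by_cases hvs : v ∈ S
      · simp only [he, if_pos hus, if_pos hvs]
        exact hd ⟨hadj, hus, hvs⟩
      · have hub : u ∈ G.bdry S := (hBmem u).mpr ⟨hus, v, hadj, hvs⟩
        simp only [he, if_pos hus, if_neg hvs]
        rw [hcd u hub]
        exact hc' ((hG'adj u v).mpr (Or.inl ⟨hadj, fun h => hvs h.2⟩))
      · have hvb : v ∈ G.bdry S := (hBmem v).mpr ⟨hvs, u, hadj.symm, hus⟩
        simp only [he, if_neg hus, if_pos hvs]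
        rw [hcd v hvb]
        exact hc' ((hG'adj u v).mpr (Or.inl ⟨hadj, fun h => hus h.1⟩))
      · simp only [he, if_neg hus, if_neg hvs]
        exact hc' ((hG'adj u v).mpr (Or.inl ⟨hadj, fun h => hus h.1⟩))
    · intro v hv
      rcases Finset.mem_union.mp hv with h | h
      · simp [he, (Finset.mem_sdiff.mp h).2]
      · have hvs := ((hBmem v).mp h).1
        simp only [he, if_pos hvs]
        exact hcd v h
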